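/- arXiv:1312.6700 — 2 statements merged into one kernel-verified Lean document; each statement's English description precedes it below -/
import Mathlib

section
/- Let x ≥ 2 be a natural number, let z₁ = 3x² + x, z₂ = 3x² - 2x, and β = z₁(3x - 2). For all m, m', d, d' with 0 ≤ m, m' < 3x - 2 and 0 ≤ d, d' < 3x + 1, if m ≠ m' then (z₁m + z₂d) mod β ≠ (z₁m' + z₂d') mod β. -/
/-- The shift value `(z₁*m + z₂*d) % β` uniquely determines the marked appendant index `m`,
where `z₁ = 3x² + x`, `z₂ = 3x² - 2x`, `β = z₁*(3x - 2)`. -/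
theorem shift_encodes_appendant (x : ℕ) (hx : 2 ≤ x) (m m' d d' : ℕ)
    (hm : m < 3 * x - 2) (hm' : m' < 3 * x - 2) (hd : d < 3 * x + 1) (hd' : d' < 3 * x + 1)
    (hne : m ≠ m') :
    ((3 * x ^ 2 + x) * m + (3 * x ^ 2 - 2 * x) * d) % ((3 * x ^ 2 + x) * (3 * x - 2)) ≠
      ((3 * x ^ 2 + x) * m' + (3 * x ^ 2 - 2 * x) * d') % ((3 * x ^ 2 + x) * (3 * x - 2)) := by
  intro h
  have hxle : 2 * x ≤ 3 * x ^ 2 := by nlinarith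
  have hx3 : 2 ≤ 3 * x := by omega
  have hz : 3 * x ^ 2 + x = (3 * x ^ 2 - 2 * x) + 3 * x := by
    zify [hxle]; ring
  have hβ : (3 * x ^ 2 + x) * (3 * x - 2) = (3 * x ^ 2 - 2 * x) * (3 * x + 1) := by
    zify [hxle, hx3]; ring
  have hdvd : (3 * x ^ 2 - 2 * x) ∣ (3 * x ^ 2 + x) * (3 * x - 2) := ⟨3 * x + 1, hβ⟩
  have key : ∀ s t a b : ℕ, ((s + t) * a + s * b) % s = (t * a) % s := by
    intro s t a b
    rw [show (s + t) * a + s * b = t * a + (a + b) * s by ring, Nat.add_mul_mod_self_right]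
  have h3 : ((3 * x ^ 2 + x) * m + (3 * x ^ 2 - 2 * x) * d) % (3 * x ^ 2 - 2 * x) =
      ((3 * x ^ 2 + x) * m' + (3 * x ^ 2 - 2 * x) * d') % (3 * x ^ 2 - 2 * x) := by
    rw [← Nat.mod_mod_of_dvd _ hdvd, h, Nat.mod_mod_of_dvd _ hdvd]
  rw [hz, key, key] at h3
  have hfac : 3 * x ^ 2 - 2 * x = x * (3 * x - 2) := by
    zify [hxle, hx3]; ring
  rw [hfac, show 3 * x * m = x * (3 * m) by ring, show 3 * x * m' = x * (3 * m') by ring,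
    Nat.mul_mod_mul_left, Nat.mul_mod_mul_left] at h3
  have h4 : 3 * m % (3 * x - 2) = 3 * m' % (3 * x - 2) :=
    Nat.eq_of_mul_eq_mul_left (by omega) h3
  have hcop : Nat.Coprime 3 (3 * x - 2) :=
    (Nat.Prime.coprime_iff_not_dvd Nat.prime_three).mpr (by omega)
  have h5 : m ≡ m' [MOD 3 * x - 2] := Nat.ModEq.cancel_left_of_coprime hcop.symm h4
  have : m % (3 * x - 2) = m' % (3 * x - 2) := h5
  rw [Nat.mod_eq_of_lt hm, Nat.mod_eq_of_lt hm'] at this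
  exact hne this
end

section
/- Let C = α₀, ..., α_{p-1} be a cyclic tag system and w = w₁...w_n a binary word. Define C_w to be the cyclic tag system with program ⟨w⟩, ⟨α₀⟩, ε, ⟨α₁⟩, ε, ..., ε, ⟨α_{p-1}⟩ where ⟨v₁...v_m⟩ := v₁0v₂0...v_m0. Then the computation of C_w on input dataword '1' simulates the computation of C on input w: after the first step of C_w, the dataword is ⟨w⟩, and thereafter every second symbol read by C_w corresponds to a symbol read by C, with the marked appendant of C_w at an encoded appendant ⟨α_j⟩ exactly when C's marker is at α_j. -/
/-- One step of a cyclic tag system with program `P`: delete the first symbol of the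
dataword, append the marked appendant iff that symbol is `1` (= `true`), and advance the
marker cyclically. The empty dataword gives a fixed configuration. -/
def ctsStep (P : List (List Bool)) : ℕ × List Bool → ℕ × List Bool
  | (m, []) => (m, [])
  | (m, a :: rest) => ((m + 1) % P.length, if a then rest ++ P.getD m [] else rest)

/-- The encoding `⟨v₁…v_n⟩ = v₁0v₂0…v_n0`. -/
def encW (w : List Bool) : List Bool := (w.map (fun a => [a, false])).flatten

/-- The program of `C_w`: `⟨w⟩, ⟨α₀⟩, ε, ⟨α₁⟩, ε, …, ε, ⟨α_{p-1}⟩`. -/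
def encProg (P : List (List Bool)) (w : List Bool) : List (List Bool) :=
  encW w ::
    match P with
    | [] => []
    | α :: rest => encW α :: (rest.map (fun a => [[], encW a])).flatten

lemma encW_cons (a : Bool) (d : List Bool) : encW (a :: d) = a :: false :: encW d := rfl

lemma encW_append (d e : List Bool) : encW (d ++ e) = encW d ++ encW e := by
  simp [encW]

lemma encProg_length (P : List (List Bool)) (hP : P ≠ []) (w : List Bool) :
    (encProg P w).length = 2 * P.length := by
  cases P with
  | nil => exact absurd rfl hP
  | cons α rest =>
    simp [encProg, List.length_flatten, Function.comp_def]
    ring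

lemma flatten_getD (rest : List (List Bool)) (m : ℕ) (hm : m < rest.length) :
    ((rest.map (fun a => [([] : List Bool), encW a])).flatten).getD (2*m+1) [] =
      encW (rest.getD m []) := by
  induction rest generalizing m with
  | nil => simp at hm
  | cons β rest' ih =>
    cases m with
    | zero => rfl
    | succ k =>
      have h2 : 2*(k+1)+1 = (2*k+1) + 2 := by ring
      rw [h2]
      show (([] : List Bool) :: encW β :: (rest'.map _).flatten).getD ((2*k+1)+2) [] = _
      rw [show (2*k+1)+2 = ((2*k+1)+1)+1 from rfl]
      rw [List.getD_cons_succ, List.getD_cons_succ]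
      rw [show (β :: rest').getD (k+1) [] = rest'.getD k [] from rfl]
      exact ih k (by simpa using hm)

lemma encProg_getD (P : List (List Bool)) (w : List Bool) (m : ℕ) (hm : m < P.length) :
    (encProg P w).getD (2*m+1) [] = encW (P.getD m []) := by
  cases P with
  | nil => simp at hm
  | cons α rest =>
    cases m with
    | zero => rfl
    | succ k =>
      have h2 : 2*(k+1)+1 = (2*k+1) + 2 := by ring
      rw [h2]
      show (encW w :: encW α :: (rest.map _).flatten).getD ((2*k+1)+2) [] = _
      rw [show (2*k+1)+2 = ((2*k+1)+1)+1 from rfl]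
      rw [List.getD_cons_succ, List.getD_cons_succ]
      rw [show (α :: rest).getD (k+1) [] = rest.getD k [] from rfl]
      exact flatten_getD rest k (by simpa using hm)

lemma two_step (P : List (List Bool)) (hP : P ≠ []) (w : List Bool)
    (m : ℕ) (hm : m < P.length) (d : List Bool) :
    (ctsStep (encProg P w))^[2] (2*m+1, encW d) =
      (2 * (ctsStep P (m, d)).1 + 1, encW ((ctsStep P (m, d)).2)) := by
  have hp : 0 < P.length := List.length_pos_iff.mpr hP
  cases d with
  | nil => exact Function.iterate_fixed rfl 2
  | cons a d =>
    rw [encW_cons]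
    have hlen := encProg_length P hP w
    have hgd := encProg_getD P w m hm
    have hmod : (((2*m+1+1) % (encProg P w).length) + 1) % (encProg P w).length
        = 2 * ((m+1) % P.length) + 1 := by
      rw [hlen]
      rcases Nat.lt_or_ge (m+1) P.length with h | h
      · rw [Nat.mod_eq_of_lt (show 2*m+1+1 < 2*P.length by omega),
          Nat.mod_eq_of_lt (show 2*m+1+1+1 < 2*P.length by omega),
          Nat.mod_eq_of_lt h]
        ring
      · have hm1 : m + 1 = P.length := by omega
        have l1 : 2*m+1+1 = 0 + 1*(2*P.length) := by omega
        rw [l1, Nat.add_mul_mod_self_right, Nat.zero_mod,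
          Nat.mod_eq_of_lt (show 0+1 < 2*P.length by omega), hm1, Nat.mod_self]
    show ctsStep (encProg P w) (ctsStep (encProg P w) (2*m+1, a :: false :: encW d)) = _
    rw [show ctsStep (encProg P w) (2*m+1, a :: false :: encW d)
        = ((2*m+1+1) % (encProg P w).length,
            if a then (false :: encW d) ++ (encProg P w).getD (2*m+1) [] else false :: encW d)
        from rfl]
    rw [hgd]
    cases a with
    | false =>
      show ((((2*m+1+1) % (encProg P w).length) + 1) % (encProg P w).length, encW d) = _
      rw [hmod]
      rfl
    | true =>
      show ((((2*m+1+1) % (encProg P w).length) + 1) % (encProg P w).length,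
          encW d ++ encW (P.getD m [])) = _
      rw [hmod, ← encW_append]
      rfl

lemma marker_lt (P : List (List Bool)) (hP : P ≠ []) (w : List Bool) (n : ℕ) :
    ((ctsStep P)^[n] (0, w)).1 < P.length := by
  have hp : 0 < P.length := List.length_pos_iff.mpr hP
  induction n with
  | zero => simpa using hp
  | succ k ih =>
    rw [Function.iterate_succ_apply']
    rcases h : (ctsStep P)^[k] (0, w) with ⟨m, d⟩
    rw [h] at ih
    cases d with
    | nil => exact ih
    | cons a d => exact Nat.mod_lt _ hp

/-- `C_w` on input dataword `1` simulates `C` on input `w`: after the first step the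
dataword is `⟨w⟩` with the marker at `⟨α₀⟩`, and after `2n+1` steps of `C_w` the
configuration is exactly the encoding of the configuration of `C` after `n` steps:
the dataword is `⟨d⟩` and the marker is at position `2m+1` (the encoded appendant
`⟨α_m⟩`) where `(m, d)` is the configuration of `C` after `n` steps. -/
theorem cts_simulation (P : List (List Bool)) (hP : P ≠ []) (w : List Bool) :
    ctsStep (encProg P w) (0, [true]) = (1, encW w) ∧
    ∀ n : ℕ,
      (ctsStep (encProg P w))^[2 * n + 1] (0, [true]) =
        (2 * ((ctsStep P)^[n] (0, w)).1 + 1, encW (((ctsStep P)^[n] (0, w)).2)) := by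
  have hp : 0 < P.length := List.length_pos_iff.mpr hP
  have hbase : ctsStep (encProg P w) (0, [true]) = (1, encW w) := by
    show ((0+1) % (encProg P w).length, [] ++ (encProg P w).getD 0 []) = _
    rw [encProg_length P hP w, Nat.mod_eq_of_lt (show 1 < 2 * P.length by omega)]
    rfl
  refine ⟨hbase, ?_⟩
  intro n
  induction n with
  | zero => simpa using hbase
  | succ k ih =>
    have h2 : 2 * (k+1) + 1 = 2 + (2*k+1) := by ring
    rw [h2, Function.iterate_add_apply, ih,
      two_step P hP w _ (marker_lt P hP w k) _,
      Function.iterate_succ_apply']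
end
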